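/- For 1-D Gaussians, the map (μ, σ) ↦ N(μ, σ²) from ℝ × ℝ_{>0} into (P₂(ℝ), W₂) is an isometry onto its image when ℝ × ℝ_{>0} carries the Euclidean metric: W₂(N(μ₁,σ₁²), N(μ₂,σ₂²)) = sqrt((μ₁−μ₂)² + (σ₁−σ₂)²). Consequently, for 1-D Gaussians Q_k = N(m_k, s_k²) and weights λ ∈ Δ_K, the W₂-barycenter is the Gaussian N(∑ₖ λₖ mₖ, (∑ₖ λₖ sₖ)²). -/

import Mathlib

open MeasureTheory ProbabilityTheory Finset Real Filter

open MeasureTheory ProbabilityTheory Finset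

/-- The squared 2-Wasserstein distance on `ℝ`, defined via the Kantorovich problem. -/
noncomputable def W2sq (P Q : Measure ℝ) : ℝ :=
  sInf {c | ∃ γ : Measure (ℝ × ℝ), γ.map Prod.fst = P ∧ γ.map Prod.snd = Q ∧
    c = ∫ p, (p.1 - p.2) ^ 2 ∂γ}

/-- The 2-Wasserstein distance on `ℝ`. -/
noncomputable def W2 (P Q : Measure ℝ) : ℝ := Real.sqrt (W2sq P Q)

namespace W2aux

variable {α : Type*} [MeasurableSpace α]

lemma abs_le_sq_add_one (t : ℝ) : |t| ≤ t ^ 2 + 1 := by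
  nlinarith [sq_nonneg (|t| - 1), sq_abs t, abs_nonneg t]

lemma integrable_of_sq {P : Measure α} [IsProbabilityMeasure P] {X : α → ℝ}
    (hX : AEStronglyMeasurable X P)
    (h2 : Integrable (fun x => X x ^ 2) P) : Integrable X P := by
  refine (h2.add (integrable_const 1)).mono' hX ?_
  filter_upwards with x
  simpa [Real.norm_eq_abs] using abs_le_sq_add_one (X x)

lemma integral_mul_le_sqrt_mul_sqrt (μ : Measure α) (f g : α → ℝ)
    (hf : Integrable (fun x => f x ^ 2) μ) (hg : Integrable (fun x => g x ^ 2) μ)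
    (hfg : Integrable (fun x => f x * g x) μ) :
    ∫ x, f x * g x ∂μ ≤ Real.sqrt (∫ x, f x ^ 2 ∂μ) * Real.sqrt (∫ x, g x ^ 2 ∂μ) := by
  set A := ∫ x, f x ^ 2 ∂μ with hA_def
  set B := ∫ x, g x ^ 2 ∂μ with hB_def
  set C := ∫ x, f x * g x ∂μ with hC_def
  have hA : 0 ≤ A := integral_nonneg fun x => sq_nonneg _
  have hB : 0 ≤ B := integral_nonneg fun x => sq_nonneg _
  have hsA := Real.sq_sqrt hA
  have hsB := Real.sq_sqrt hB
  rcases eq_or_lt_of_le (mul_nonneg (Real.sqrt_nonneg A) (Real.sqrt_nonneg B)) with h0 | hpos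
  · -- √A * √B = 0 : show C = 0
    have hAB : A = 0 ∨ B = 0 := by
      rcases mul_eq_zero.mp h0.symm with h | h
      · exact Or.inl (by rwa [Real.sqrt_eq_zero hA] at h)
      · exact Or.inr (by rwa [Real.sqrt_eq_zero hB] at h)
    have hC0 : C = 0 := by
      rcases hAB with h | h
      · have hf0 : (fun x => f x ^ 2) =ᵐ[μ] 0 :=
          (integral_eq_zero_iff_of_nonneg (fun x => sq_nonneg _) hf).mp h
        have : (fun x => f x * g x) =ᵐ[μ] 0 := by
          filter_upwards [hf0] with x hx
          have : f x = 0 := by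
            have : f x ^ 2 = 0 := hx
            exact pow_eq_zero_iff (n := 2) (by norm_num) |>.mp this
          simp [this]
        rw [hC_def]; exact integral_eq_zero_of_ae this
      · have hg0 : (fun x => g x ^ 2) =ᵐ[μ] 0 :=
          (integral_eq_zero_iff_of_nonneg (fun x => sq_nonneg _) hg).mp h
        have : (fun x => f x * g x) =ᵐ[μ] 0 := by
          filter_upwards [hg0] with x hx
          have : g x = 0 := pow_eq_zero_iff (n := 2) (by norm_num) |>.mp hx
          simp [this]
        rw [hC_def]; exact integral_eq_zero_of_ae this
    rw [hC0, ← h0]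
  · -- positive case
    have key : 0 ≤ B * A - 2 * (Real.sqrt A * Real.sqrt B) * C + A * B := by
      have h0 : 0 ≤ ∫ x, (Real.sqrt B * f x - Real.sqrt A * g x) ^ 2 ∂μ :=
        integral_nonneg fun x => sq_nonneg _
      have hexp : (fun x => (Real.sqrt B * f x - Real.sqrt A * g x) ^ 2)
          = fun x => (B * f x ^ 2 - (2 * (Real.sqrt A * Real.sqrt B)) * (f x * g x))
              + A * g x ^ 2 := by
        funext x
        linear_combination (f x ^ 2) * hsB + (g x ^ 2) * hsA
      have h1 : ∫ x, (B * f x ^ 2 - 2 * (Real.sqrt A * Real.sqrt B) * (f x * g x)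
            + A * g x ^ 2) ∂μ
          = B * A - 2 * (Real.sqrt A * Real.sqrt B) * C + A * B := by
        have i2 : Integrable (fun x => B * f x ^ 2) μ := hf.const_mul B
        have i3 : Integrable (fun x => 2 * (Real.sqrt A * Real.sqrt B) * (f x * g x)) μ :=
          hfg.const_mul _
        have i4 : Integrable (fun x => A * g x ^ 2) μ := hg.const_mul A
        have i1 : Integrable
            (fun x => B * f x ^ 2 - 2 * (Real.sqrt A * Real.sqrt B) * (f x * g x)) μ := i2.sub i3
        rw [integral_add i1 i4, integral_sub i2 i3,
          integral_const_mul _ _, integral_const_mul _ _, integral_const_mul _ _]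
      rw [hexp, h1] at h0
      linarith [h0]
    nlinarith [key, hpos, hsA, hsB]


section Transfer

variable {γ : Measure (ℝ × ℝ)} {P Q : Measure ℝ}

lemma map_integral_fst (h : γ.map Prod.fst = P) {φ : ℝ → ℝ}
    (hφ : AEStronglyMeasurable φ P) : ∫ p, φ p.1 ∂γ = ∫ x, φ x ∂P := by
  subst h
  exact (integral_map measurable_fst.aemeasurable hφ).symm

lemma map_integral_snd (h : γ.map Prod.snd = Q) {φ : ℝ → ℝ}
    (hφ : AEStronglyMeasurable φ Q) : ∫ p, φ p.2 ∂γ = ∫ x, φ x ∂Q := by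
  subst h
  exact (integral_map measurable_snd.aemeasurable hφ).symm

lemma map_integrable_fst (h : γ.map Prod.fst = P) {φ : ℝ → ℝ}
    (hφ : Integrable φ P) : Integrable (fun p => φ p.1) γ := by
  subst h
  exact (integrable_map_measure hφ.1 measurable_fst.aemeasurable).mp hφ

lemma map_integrable_snd (h : γ.map Prod.snd = Q) {φ : ℝ → ℝ}
    (hφ : Integrable φ Q) : Integrable (fun p => φ p.2) γ := by
  subst h
  exact (integrable_map_measure hφ.1 measurable_snd.aemeasurable).mp hφ

lemma isProbabilityMeasure_of_map_fst (h : γ.map Prod.fst = P) [IsProbabilityMeasure P] :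
    IsProbabilityMeasure γ := by
  constructor
  have : (γ.map Prod.fst) Set.univ = 1 := by rw [h]; exact measure_univ
  rwa [Measure.map_apply measurable_fst MeasurableSet.univ, Set.preimage_univ] at this

end Transfer

section LB

variable {P Q : Measure ℝ}

lemma integrable_shift_sq [IsProbabilityMeasure P]
    (hP2 : Integrable (fun x : ℝ => x ^ 2) P) (t : ℝ) :
    Integrable (fun x : ℝ => (x - t) ^ 2) P := by
  have hid : Integrable (fun x : ℝ => x) P :=
    integrable_of_sq aestronglyMeasurable_id hP2
  have h : (fun x : ℝ => (x - t) ^ 2) = fun x => (x ^ 2 - 2 * t * x) + t ^ 2 := by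
    funext x; ring
  rw [h]
  exact (hP2.sub ((hid.const_mul (2 * t)).congr (by filter_upwards with x; ring))).add
    (integrable_const _)

lemma integral_shift_eq_zero [IsProbabilityMeasure P]
    (hP2 : Integrable (fun x : ℝ => x ^ 2) P) :
    ∫ x, (x - ∫ y, y ∂P) ∂P = 0 := by
  have hid : Integrable (fun x : ℝ => x) P := integrable_of_sq aestronglyMeasurable_id hP2
  rw [integral_sub hid (integrable_const _), integral_const]
  simp

/-- Lower bound for the transport cost of any coupling. -/
lemma cost_lower_bound [IsProbabilityMeasure P] [IsProbabilityMeasure Q]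
    (hP2 : Integrable (fun x : ℝ => x ^ 2) P) (hQ2 : Integrable (fun x : ℝ => x ^ 2) Q)
    (γ : Measure (ℝ × ℝ)) (h1 : γ.map Prod.fst = P) (h2 : γ.map Prod.snd = Q) :
    (∫ x, x ∂P - ∫ x, x ∂Q) ^ 2
      + (Real.sqrt (∫ x, (x - ∫ y, y ∂P) ^ 2 ∂P)
          - Real.sqrt (∫ x, (x - ∫ y, y ∂Q) ^ 2 ∂Q)) ^ 2
      ≤ ∫ p, (p.1 - p.2) ^ 2 ∂γ := by
  have hγ : IsProbabilityMeasure γ := isProbabilityMeasure_of_map_fst h1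
  set a := ∫ x, x ∂P with ha
  set b := ∫ x, x ∂Q with hb
  set A := ∫ x, (x - a) ^ 2 ∂P with hA
  set B := ∫ x, (x - b) ^ 2 ∂Q with hB
  have hA0 : 0 ≤ A := integral_nonneg fun x => sq_nonneg _
  have hB0 : 0 ≤ B := integral_nonneg fun x => sq_nonneg _
  -- integrabilities over γ
  have iF2 : Integrable (fun p : ℝ × ℝ => (p.1 - a) ^ 2) γ :=
    map_integrable_fst h1 (integrable_shift_sq hP2 a)
  have iG2 : Integrable (fun p : ℝ × ℝ => (p.2 - b) ^ 2) γ :=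
    map_integrable_snd h2 (integrable_shift_sq hQ2 b)
  have iF : Integrable (fun p : ℝ × ℝ => p.1 - a) γ :=
    map_integrable_fst h1 ((integrable_of_sq aestronglyMeasurable_id hP2).sub
      (integrable_const _))
  have iG : Integrable (fun p : ℝ × ℝ => p.2 - b) γ :=
    map_integrable_snd h2 ((integrable_of_sq aestronglyMeasurable_id hQ2).sub
      (integrable_const _))
  have iFG : Integrable (fun p : ℝ × ℝ => (p.1 - a) * (p.2 - b)) γ := by
    refine (iF2.add iG2).mono' ?_ ?_
    · exact ((continuous_fst.sub continuous_const).mul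
        (continuous_snd.sub continuous_const)).aestronglyMeasurable
    · filter_upwards with p
      have h := sq_nonneg (|p.1 - a| - |p.2 - b|)
      simp only [Pi.add_apply]
      rw [Real.norm_eq_abs, abs_mul]
      nlinarith [sq_abs (p.1 - a), sq_abs (p.2 - b), abs_nonneg (p.1 - a), abs_nonneg (p.2 - b)]
  -- integrals over γ
  have hF0 : ∫ p, (p.1 - a) ∂γ = 0 := by
    rw [map_integral_fst h1 (φ := fun x => x - a) (by fun_prop)]
    exact integral_shift_eq_zero hP2
  have hG0 : ∫ p, (p.2 - b) ∂γ = 0 := by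
    rw [map_integral_snd h2 (φ := fun x => x - b) (by fun_prop)]
    exact integral_shift_eq_zero hQ2
  have hFA : ∫ p, (p.1 - a) ^ 2 ∂γ = A := by
    rw [map_integral_fst h1 (φ := fun x => (x - a) ^ 2)
      (Continuous.aestronglyMeasurable (by continuity))]
  have hGB : ∫ p, (p.2 - b) ^ 2 ∂γ = B := by
    rw [map_integral_snd h2 (φ := fun x => (x - b) ^ 2)
      (Continuous.aestronglyMeasurable (by continuity))]
  set C := ∫ p, (p.1 - a) * (p.2 - b) ∂γ with hC
  -- expansion of the cost
  have expand : ∫ p, (p.1 - p.2) ^ 2 ∂γ = A + B + (a - b) ^ 2 - 2 * C := by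
    have hfun : (fun p : ℝ × ℝ => (p.1 - p.2) ^ 2)
        = fun p => ((((p.1 - a) ^ 2 + (p.2 - b) ^ 2) - 2 * ((p.1 - a) * (p.2 - b)))
            + (2 * (a - b)) * (p.1 - a)) - ((2 * (a - b)) * (p.2 - b) - (a - b) ^ 2) := by
      funext p; ring
    have i5 : Integrable (fun p : ℝ × ℝ => (p.1 - a) ^ 2 + (p.2 - b) ^ 2) γ := iF2.add iG2
    have i6 : Integrable (fun p : ℝ × ℝ => 2 * ((p.1 - a) * (p.2 - b))) γ := iFG.const_mul 2
    have i7 : Integrable (fun p : ℝ × ℝ =>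
        ((p.1 - a) ^ 2 + (p.2 - b) ^ 2) - 2 * ((p.1 - a) * (p.2 - b))) γ := i5.sub i6
    have i8 : Integrable (fun p : ℝ × ℝ => (2 * (a - b)) * (p.1 - a)) γ := iF.const_mul _
    have i9 : Integrable (fun p : ℝ × ℝ =>
        (((p.1 - a) ^ 2 + (p.2 - b) ^ 2) - 2 * ((p.1 - a) * (p.2 - b)))
          + (2 * (a - b)) * (p.1 - a)) γ := i7.add i8
    have i10 : Integrable (fun p : ℝ × ℝ => (2 * (a - b)) * (p.2 - b)) γ := iG.const_mul _
    have i11 : Integrable (fun p : ℝ × ℝ =>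
        (2 * (a - b)) * (p.2 - b) - (a - b) ^ 2) γ := i10.sub (integrable_const _)
    rw [hfun, integral_sub i9 i11, integral_add i7 i8, integral_sub i5 i6,
      integral_add iF2 iG2, integral_sub i10 (integrable_const _),
      integral_const_mul _ _, integral_const_mul _ _, integral_const_mul _ _,
      hF0, hG0, hFA, hGB, integral_const]
    simp [measure_univ]
    ring
  have hCS : C ≤ Real.sqrt A * Real.sqrt B := by
    have := integral_mul_le_sqrt_mul_sqrt γ (fun p => p.1 - a) (fun p => p.2 - b) iF2 iG2 iFG
    rwa [hFA, hGB] at this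
  rw [expand]
  have hsA := Real.sq_sqrt hA0
  have hsB := Real.sq_sqrt hB0
  nlinarith [hCS, hsA, hsB]

end LB


section Gauss

/-- Integral against a nondegenerate Gaussian as a Lebesgue integral against the density. -/
lemma integral_gaussianReal_eq (μ : ℝ) {v : NNReal} (hv : v ≠ 0) (g : ℝ → ℝ) :
    ∫ x, g x ∂(gaussianReal μ v) = ∫ x, gaussianPDFReal μ v x * g x := by
  rw [gaussianReal_of_var_ne_zero μ hv]
  have h : (gaussianPDF μ v) = fun x => ((gaussianPDFReal μ v x).toNNReal : ENNReal) := rfl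
  rw [h, integral_withDensity_eq_integral_smul
    ((measurable_gaussianPDFReal μ v).real_toNNReal) g]
  congr 1
  funext x
  rw [NNReal.smul_def, smul_eq_mul, Real.coe_toNNReal _ (gaussianPDFReal_nonneg μ v x)]

lemma integrable_gaussianReal_iff (μ : ℝ) {v : NNReal} (hv : v ≠ 0) (g : ℝ → ℝ) :
    Integrable g (gaussianReal μ v) ↔
      Integrable (fun x => gaussianPDFReal μ v x * g x) volume := by
  rw [gaussianReal_of_var_ne_zero μ hv]
  have h : (gaussianPDF μ v) = fun x => ((gaussianPDFReal μ v x).toNNReal : ENNReal) := rfl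
  rw [h, integrable_withDensity_iff_integrable_smul
    ((measurable_gaussianPDFReal μ v).real_toNNReal)]
  have hpt : ∀ x, (gaussianPDFReal μ v x).toNNReal • g x = gaussianPDFReal μ v x * g x :=
    fun x => by
      rw [NNReal.smul_def, smul_eq_mul, Real.coe_toNNReal _ (gaussianPDFReal_nonneg μ v x)]
  constructor
  · intro hh
    exact hh.congr (Filter.Eventually.of_forall hpt)
  · intro hh
    exact hh.congr (Filter.Eventually.of_forall fun x => (hpt x).symm)

lemma pdf01 : ∀ x : ℝ, gaussianPDFReal 0 1 x
    = (Real.sqrt (2 * π))⁻¹ * Real.exp (-(1/2) * x ^ 2) := by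
  intro x
  unfold gaussianPDFReal
  push_cast
  norm_num
  ring_nf
  exact Or.inl trivial

lemma std_integrable_sq : Integrable (fun x : ℝ => x ^ 2) (gaussianReal 0 1) := by
  rw [integrable_gaussianReal_iff 0 one_ne_zero]
  have h := (integrable_rpow_mul_exp_neg_mul_sq (b := 1/2) (by norm_num)
    (s := ((2 : ℕ) : ℝ)) (by norm_num)).const_mul (Real.sqrt (2 * π))⁻¹
  refine h.congr ?_
  filter_upwards with x
  rw [pdf01 x, Real.rpow_natCast]
  push_cast
  ring

lemma tendsto_exp_neg_sq_atTop : Tendsto (fun x : ℝ => Real.exp (-(1/2) * x ^ 2))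
    atTop (nhds 0) := by
  apply Real.tendsto_exp_atBot.comp
  apply Filter.Tendsto.const_mul_atTop_of_neg (by norm_num : (-(1/2) : ℝ) < 0)
  exact tendsto_pow_atTop (by norm_num : (2:ℕ) ≠ 0)

lemma tendsto_exp_neg_sq_atBot : Tendsto (fun x : ℝ => Real.exp (-(1/2) * x ^ 2))
    atBot (nhds 0) := by
  have h := tendsto_exp_neg_sq_atTop.comp tendsto_neg_atBot_atTop
  refine h.congr fun x => ?_
  simp [Function.comp]

lemma tendsto_id_mul_exp_neg_sq_atTop :
    Tendsto (fun x : ℝ => x * Real.exp (-(1/2) * x ^ 2)) atTop (nhds 0) := by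
  have h := rpow_mul_exp_neg_mul_sq_isLittleO_exp_neg (b := 1/2) (by norm_num) 1
  have h2 : Tendsto (fun x : ℝ => Real.exp (-(1/2) * x)) atTop (nhds 0) := by
    apply Real.tendsto_exp_atBot.comp
    exact Filter.Tendsto.const_mul_atTop_of_neg (by norm_num) tendsto_id
  have := h.isBigO.trans_tendsto h2
  refine this.congr' ?_
  filter_upwards with x
  rw [Real.rpow_one]

lemma tendsto_id_mul_exp_neg_sq_atBot :
    Tendsto (fun x : ℝ => x * Real.exp (-(1/2) * x ^ 2)) atBot (nhds 0) := by
  have h := (tendsto_id_mul_exp_neg_sq_atTop.comp tendsto_neg_atBot_atTop).neg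
  rw [neg_zero] at h
  refine h.congr fun x => ?_
  simp [Function.comp]

lemma integrable_id_mul_exp : Integrable (fun x : ℝ => x * Real.exp (-(1/2) * x ^ 2)) volume := by
  have h := integrable_mul_exp_neg_mul_sq (b := 1/2) (by norm_num)
  refine h.congr ?_
  filter_upwards with x
  norm_num

lemma integral_id_mul_exp : ∫ x : ℝ, x * Real.exp (-(1/2) * x ^ 2) = 0 := by
  have hder : ∀ x : ℝ, HasDerivAt (fun y : ℝ => -Real.exp (-(1/2) * y ^ 2))
      (x * Real.exp (-(1/2) * x ^ 2)) x := by
    intro x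
    have h1 : HasDerivAt (fun y : ℝ => -(1/2) * y ^ 2) (-(1/2) * (2 * x)) x :=
      ((hasDerivAt_pow 2 x).const_mul _).congr_deriv (by ring)
    have h2 := (h1.exp).neg
    refine h2.congr_deriv ?_
    ring
  have := integral_of_hasDerivAt_of_tendsto hder integrable_id_mul_exp
    tendsto_exp_neg_sq_atBot.neg tendsto_exp_neg_sq_atTop.neg
  simpa using this

lemma integrable_sq_mul_exp :
    Integrable (fun x : ℝ => x ^ 2 * Real.exp (-(1/2) * x ^ 2)) volume := by
  have h := integrable_rpow_mul_exp_neg_mul_sq (b := 1/2) (by norm_num)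
    (s := ((2 : ℕ) : ℝ)) (by norm_num)
  refine h.congr ?_
  filter_upwards with x
  rw [Real.rpow_natCast]

lemma integrable_exp_sq : Integrable (fun x : ℝ => Real.exp (-(1/2) * x ^ 2)) volume :=
  integrable_exp_neg_mul_sq (by norm_num)

lemma integral_sq_mul_exp :
    ∫ x : ℝ, x ^ 2 * Real.exp (-(1/2) * x ^ 2) = Real.sqrt (2 * π) := by
  have hder : ∀ x : ℝ, HasDerivAt (fun y : ℝ => -(y * Real.exp (-(1/2) * y ^ 2)))
      (x ^ 2 * Real.exp (-(1/2) * x ^ 2) - Real.exp (-(1/2) * x ^ 2)) x := by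
    intro x
    have h1 : HasDerivAt (fun y : ℝ => -(1/2) * y ^ 2) (-(1/2) * (2 * x)) x :=
      ((hasDerivAt_pow 2 x).const_mul _).congr_deriv (by ring)
    have h2 := ((hasDerivAt_id x).mul h1.exp).neg
    simp only [id_eq] at h2
    refine h2.congr_deriv ?_
    ring
  have hint : Integrable (fun x : ℝ =>
      x ^ 2 * Real.exp (-(1/2) * x ^ 2) - Real.exp (-(1/2) * x ^ 2)) volume :=
    integrable_sq_mul_exp.sub integrable_exp_sq
  have h0 := integral_of_hasDerivAt_of_tendsto hder hint
    tendsto_id_mul_exp_neg_sq_atBot.neg tendsto_id_mul_exp_neg_sq_atTop.neg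
  rw [integral_sub integrable_sq_mul_exp integrable_exp_sq] at h0
  have hg : ∫ x : ℝ, Real.exp (-(1/2) * x ^ 2) = Real.sqrt (2 * π) := by
    have := integral_gaussian (1/2)
    rw [this]
    rw [div_div_eq_mul_div, div_one]
    ring_nf
  rw [hg] at h0
  linarith [h0]

lemma sqrt_two_pi_pos : (0:ℝ) < Real.sqrt (2 * π) :=
  Real.sqrt_pos.mpr (by positivity)

lemma std_integral_id : ∫ x, x ∂(gaussianReal 0 1) = 0 := by
  rw [integral_gaussianReal_eq 0 one_ne_zero]
  have : ∀ x : ℝ, gaussianPDFReal 0 1 x * x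
      = (Real.sqrt (2 * π))⁻¹ * (x * Real.exp (-(1/2) * x ^ 2)) := by
    intro x; rw [pdf01 x]; ring
  rw [integral_congr_ae (Filter.Eventually.of_forall this), integral_const_mul _ _,
    integral_id_mul_exp, mul_zero]

lemma std_integral_sq : ∫ x, x ^ 2 ∂(gaussianReal 0 1) = 1 := by
  rw [integral_gaussianReal_eq 0 one_ne_zero]
  have : ∀ x : ℝ, gaussianPDFReal 0 1 x * x ^ 2
      = (Real.sqrt (2 * π))⁻¹ * (x ^ 2 * Real.exp (-(1/2) * x ^ 2)) := by
    intro x; rw [pdf01 x]; ring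
  rw [integral_congr_ae (Filter.Eventually.of_forall this), integral_const_mul _ _,
    integral_sq_mul_exp, inv_mul_cancel₀ (ne_of_gt sqrt_two_pi_pos)]

end Gauss


section Gauss2

lemma std_integrable_affine_sq (c d : ℝ) :
    Integrable (fun x : ℝ => (c * x + d) ^ 2) (gaussianReal 0 1) := by
  have hid : Integrable (fun x : ℝ => x) (gaussianReal 0 1) :=
    integrable_of_sq aestronglyMeasurable_id std_integrable_sq
  have h : (fun x : ℝ => (c * x + d) ^ 2)
      = fun x => (c ^ 2 * x ^ 2 + (2 * c * d) * x) + d ^ 2 := by funext x; ring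
  rw [h]
  exact ((std_integrable_sq.const_mul _).add (hid.const_mul _)).add (integrable_const _)

lemma std_integral_affine_sq (c d : ℝ) :
    ∫ x, (c * x + d) ^ 2 ∂(gaussianReal 0 1) = c ^ 2 + d ^ 2 := by
  have hid : Integrable (fun x : ℝ => x) (gaussianReal 0 1) :=
    integrable_of_sq aestronglyMeasurable_id std_integrable_sq
  have h : (fun x : ℝ => (c * x + d) ^ 2)
      = fun x => (c ^ 2 * x ^ 2 + (2 * c * d) * x) + d ^ 2 := by funext x; ring
  have i1 : Integrable (fun x : ℝ => c ^ 2 * x ^ 2) (gaussianReal 0 1) :=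
    std_integrable_sq.const_mul _
  have i2 : Integrable (fun x : ℝ => (2 * c * d) * x) (gaussianReal 0 1) := hid.const_mul _
  have i3 : Integrable (fun x : ℝ => c ^ 2 * x ^ 2 + (2 * c * d) * x) (gaussianReal 0 1) :=
    i1.add i2
  rw [h, integral_add i3 (integrable_const _), integral_add i1 i2,
    integral_const_mul _ _, integral_const_mul _ _, std_integral_sq, std_integral_id,
    integral_const]
  simp [measure_univ]

lemma std_integral_affine (c d : ℝ) :
    ∫ x, (c * x + d) ∂(gaussianReal 0 1) = d := by
  have hid : Integrable (fun x : ℝ => x) (gaussianReal 0 1) :=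
    integrable_of_sq aestronglyMeasurable_id std_integrable_sq
  have i2 : Integrable (fun x : ℝ => c * x) (gaussianReal 0 1) := hid.const_mul _
  rw [integral_add i2 (integrable_const _), integral_const_mul _ _,
    std_integral_id, integral_const]
  simp [measure_univ]

lemma gaussianReal_eq_map {μ σ : ℝ} (hσ : 0 < σ) :
    gaussianReal μ (σ ^ 2).toNNReal = (gaussianReal 0 1).map (fun x => σ * x + μ) := by
  have hmap : (fun x : ℝ => σ * x + μ) = (· + μ) ∘ (fun x : ℝ => σ * x) := rfl
  rw [hmap, ← Measure.map_map (measurable_id'.add_const μ) (measurable_id'.const_mul _),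
    gaussianReal_map_const_mul, gaussianReal_map_add_const]
  congr 1
  · simp
  · ext
    push_cast
    rw [Real.coe_toNNReal _ (sq_nonneg σ)]
    simp

lemma gauss_int_sq {μ σ : ℝ} (hσ : 0 < σ) :
    Integrable (fun x : ℝ => x ^ 2) (gaussianReal μ (σ ^ 2).toNNReal) := by
  rw [gaussianReal_eq_map hσ]
  rw [integrable_map_measure (Continuous.aestronglyMeasurable (by continuity))
    (((measurable_id'.const_mul σ).add_const μ).aemeasurable)]
  exact std_integrable_affine_sq σ μ

lemma gauss_mean {μ σ : ℝ} (hσ : 0 < σ) :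
    ∫ x, x ∂(gaussianReal μ (σ ^ 2).toNNReal) = μ := by
  rw [gaussianReal_eq_map hσ,
    integral_map (((measurable_id'.const_mul σ).add_const μ).aemeasurable)
      (f := fun y => y) continuous_id'.aestronglyMeasurable]
  exact std_integral_affine σ μ

lemma gauss_var {μ σ : ℝ} (hσ : 0 < σ) :
    ∫ x, (x - μ) ^ 2 ∂(gaussianReal μ (σ ^ 2).toNNReal) = σ ^ 2 := by
  rw [gaussianReal_eq_map hσ,
    integral_map (((measurable_id'.const_mul σ).add_const μ).aemeasurable)
      (Continuous.aestronglyMeasurable (by continuity))]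
  have h : (fun x : ℝ => (σ * x + μ - μ) ^ 2) = fun x => (σ * x + 0) ^ 2 := by
    funext x; ring
  rw [h, std_integral_affine_sq σ 0]
  ring

lemma gaussian_coupling {μ₁ μ₂ σ₁ σ₂ : ℝ} (h₁ : 0 < σ₁) (h₂ : 0 < σ₂) :
    ∃ γ : Measure (ℝ × ℝ), γ.map Prod.fst = gaussianReal μ₁ (σ₁ ^ 2).toNNReal ∧
      γ.map Prod.snd = gaussianReal μ₂ (σ₂ ^ 2).toNNReal ∧
      ∫ p, (p.1 - p.2) ^ 2 ∂γ = (μ₁ - μ₂) ^ 2 + (σ₁ - σ₂) ^ 2 := by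
  set φ : ℝ → ℝ × ℝ := fun x => (σ₁ * x + μ₁, σ₂ * x + μ₂) with hφ
  have hφm : Measurable φ :=
    ((measurable_id'.const_mul σ₁).add_const μ₁).prodMk
      ((measurable_id'.const_mul σ₂).add_const μ₂)
  refine ⟨(gaussianReal 0 1).map φ, ?_, ?_, ?_⟩
  · rw [Measure.map_map measurable_fst hφm, gaussianReal_eq_map h₁]
    rfl
  · rw [Measure.map_map measurable_snd hφm, gaussianReal_eq_map h₂]
    rfl
  · rw [integral_map hφm.aemeasurable (Continuous.aestronglyMeasurable (by continuity))]
    have h : (fun x : ℝ => ((φ x).1 - (φ x).2) ^ 2)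
        = fun x => ((σ₁ - σ₂) * x + (μ₁ - μ₂)) ^ 2 := by
      funext x; simp only [hφ]; ring
    rw [h, std_integral_affine_sq]
    ring

end Gauss2

end W2aux

namespace W2aux

lemma bddBelow_couplings (P Q : Measure ℝ) :
    BddBelow {c | ∃ γ : Measure (ℝ × ℝ), γ.map Prod.fst = P ∧ γ.map Prod.snd = Q ∧
      c = ∫ p, (p.1 - p.2) ^ 2 ∂γ} := by
  refine ⟨0, fun c hc => ?_⟩
  obtain ⟨γ, -, -, rfl⟩ := hc
  exact integral_nonneg fun p => sq_nonneg _

lemma W2sq_gaussian {μ₁ μ₂ σ₁ σ₂ : ℝ} (h₁ : 0 < σ₁) (h₂ : 0 < σ₂) :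
    W2sq (gaussianReal μ₁ (σ₁ ^ 2).toNNReal) (gaussianReal μ₂ (σ₂ ^ 2).toNNReal)
      = (μ₁ - μ₂) ^ 2 + (σ₁ - σ₂) ^ 2 := by
  obtain ⟨γ, hγ1, hγ2, hcost⟩ := gaussian_coupling h₁ h₂
  apply le_antisymm
  · exact csInf_le (bddBelow_couplings _ _) ⟨γ, hγ1, hγ2, hcost.symm⟩
  · refine le_csInf ⟨(μ₁ - μ₂) ^ 2 + (σ₁ - σ₂) ^ 2, γ, hγ1, hγ2, hcost.symm⟩ ?_
    rintro c ⟨γ', h1', h2', rfl⟩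
    have hlb := cost_lower_bound (gauss_int_sq h₁) (gauss_int_sq h₂) γ' h1' h2'
    rw [gauss_mean h₁, gauss_mean h₂, gauss_var h₁, gauss_var h₂,
      Real.sqrt_sq h₁.le, Real.sqrt_sq h₂.le] at hlb
    exact hlb

lemma W2sq_ge {P : Measure ℝ} [IsProbabilityMeasure P]
    (hP2 : Integrable (fun x : ℝ => x ^ 2) P) {μ σ : ℝ} (hσ : 0 < σ) :
    (∫ x, x ∂P - μ) ^ 2
      + (Real.sqrt (∫ x, (x - ∫ y, y ∂P) ^ 2 ∂P) - σ) ^ 2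
      ≤ W2sq P (gaussianReal μ (σ ^ 2).toNNReal) := by
  apply le_csInf
  · refine ⟨∫ p, (p.1 - p.2) ^ 2 ∂(P.prod (gaussianReal μ (σ ^ 2).toNNReal)),
      P.prod (gaussianReal μ (σ ^ 2).toNNReal), ?_, ?_, rfl⟩
    · rw [Measure.map_fst_prod]; simp [measure_univ]
    · rw [Measure.map_snd_prod]; simp [measure_univ]
  · rintro c ⟨γ, h1, h2, rfl⟩
    have hlb := cost_lower_bound hP2 (gauss_int_sq hσ) γ h1 h2
    rw [gauss_mean hσ, gauss_var hσ, Real.sqrt_sq hσ.le] at hlb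
    exact hlb

lemma frechet {K : ℕ} (lam : Fin K → ℝ) (hsum : ∑ k, lam k = 1) (a : Fin K → ℝ) (t : ℝ) :
    ∑ k, lam k * ((∑ j, lam j * a j) - a k) ^ 2 ≤ ∑ k, lam k * (t - a k) ^ 2 := by
  set ab := ∑ j, lam j * a j with hab
  have key : ∑ k, lam k * (t - a k) ^ 2 - ∑ k, lam k * (ab - a k) ^ 2 = (t - ab) ^ 2 := by
    rw [← Finset.sum_sub_distrib]
    have h : ∀ k ∈ Finset.univ, lam k * (t - a k) ^ 2 - lam k * (ab - a k) ^ 2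
        = ((t - ab) * (t + ab)) * lam k - (2 * (t - ab)) * (lam k * a k) := by
      intro k _; ring
    rw [Finset.sum_congr rfl h, Finset.sum_sub_distrib, ← Finset.mul_sum, ← Finset.mul_sum,
      hsum, ← hab]
    ring
  nlinarith [sq_nonneg (t - ab), key]

end W2aux

open W2aux

/-- The map `(μ,σ) ↦ N(μ,σ²)` is an isometry from `ℝ × ℝ_{>0}` (with Euclidean metric) into
`(P₂(ℝ), W₂)`; consequently, the `W₂`-barycenter of Gaussians `N(mₖ, sₖ²)` with weights
`λ ∈ Δ_K` is the Gaussian `N(∑ₖ λₖ mₖ, (∑ₖ λₖ sₖ)²)`. -/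
theorem gaussian_isometry_and_barycenter {K : ℕ}
    (lam : Fin K → ℝ) (hlam : ∀ k, 0 ≤ lam k) (hsum : ∑ k, lam k = 1)
    (m s : Fin K → ℝ) (hs : ∀ k, 0 < s k) :
    (∀ μ₁ μ₂ σ₁ σ₂ : ℝ, 0 < σ₁ → 0 < σ₂ →
      W2 (gaussianReal μ₁ (Real.toNNReal (σ₁ ^ 2))) (gaussianReal μ₂ (Real.toNNReal (σ₂ ^ 2)))
        = Real.sqrt ((μ₁ - μ₂) ^ 2 + (σ₁ - σ₂) ^ 2)) ∧
    (let Qbar : Measure ℝ :=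
        gaussianReal (∑ k, lam k * m k) (Real.toNNReal ((∑ k, lam k * s k) ^ 2))
      ∀ P : Measure ℝ, IsProbabilityMeasure P → Integrable (fun x => x ^ 2) P →
        ∑ k, lam k * W2sq Qbar (gaussianReal (m k) (Real.toNNReal (s k ^ 2))) ≤
        ∑ k, lam k * W2sq P (gaussianReal (m k) (Real.toNNReal (s k ^ 2)))) := by
  constructor
  · intro μ₁ μ₂ σ₁ σ₂ h₁ h₂
    rw [W2, W2sq_gaussian h₁ h₂]
  · intro Qbar P hPprob hP2
    have hsbar : 0 < ∑ k, lam k * s k := by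
      have hterm : ∀ k ∈ Finset.univ, 0 ≤ lam k * s k :=
        fun k _ => mul_nonneg (hlam k) (hs k).le
      rcases (Finset.sum_nonneg hterm).lt_or_eq with h | h
      · exact h
      · exfalso
        have hz := (Finset.sum_eq_zero_iff_of_nonneg hterm).mp h.symm
        have hlz : ∀ k ∈ Finset.univ, lam k = 0 := by
          intro k hk
          rcases mul_eq_zero.mp (hz k hk) with h' | h'
          · exact h'
          · exact absurd h' (hs k).ne'
        rw [Finset.sum_congr rfl hlz] at hsum
        simp at hsum
    set mbar := ∑ k, lam k * m k with hmbar
    set sbar := ∑ k, lam k * s k with hsbar_def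
    set aP := ∫ x, x ∂P with haP
    set sP := Real.sqrt (∫ x, (x - ∫ y, y ∂P) ^ 2 ∂P) with hsP
    have hQbar : ∀ k, W2sq Qbar (gaussianReal (m k) (Real.toNNReal (s k ^ 2)))
        = (mbar - m k) ^ 2 + (sbar - s k) ^ 2 := fun k => W2sq_gaussian hsbar (hs k)
    calc ∑ k, lam k * W2sq Qbar (gaussianReal (m k) (Real.toNNReal (s k ^ 2)))
        = ∑ k, (lam k * (mbar - m k) ^ 2 + lam k * (sbar - s k) ^ 2) := by
          refine Finset.sum_congr rfl fun k _ => ?_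
          rw [hQbar k]; ring
      _ = (∑ k, lam k * (mbar - m k) ^ 2) + ∑ k, lam k * (sbar - s k) ^ 2 :=
          Finset.sum_add_distrib
      _ ≤ (∑ k, lam k * (aP - m k) ^ 2) + ∑ k, lam k * (sP - s k) ^ 2 := by
          gcongr ?_ + ?_
          · exact frechet lam hsum m aP
          · exact frechet lam hsum s sP
      _ = ∑ k, (lam k * (aP - m k) ^ 2 + lam k * (sP - s k) ^ 2) :=
          Finset.sum_add_distrib.symm
      _ ≤ ∑ k, lam k * W2sq P (gaussianReal (m k) (Real.toNNReal (s k ^ 2))) := by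
          refine Finset.sum_le_sum fun k _ => ?_
          have h := W2sq_ge hP2 (hs k) (μ := m k)
          calc lam k * (aP - m k) ^ 2 + lam k * (sP - s k) ^ 2
              = lam k * ((aP - m k) ^ 2 + (sP - s k) ^ 2) := by ring
            _ ≤ lam k * W2sq P (gaussianReal (m k) (Real.toNNReal (s k ^ 2))) :=
                mul_le_mul_of_nonneg_left h (hlam k)
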